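/- Let (ψ, φ) extend an automaton on finite sets Q, S ⊂ ℝ and be (δ, μ)-stable (0 < δ < 1, 0 ≤ μ < 1). Let q⁰, …, q^m ∈ Q and p ≥ 1 be such that the p-fold iterate of the composition A_{q^m} ∘ ⋯ ∘ A_{q^0} is the identity map of S^ℕ. Let t > 1, M ≥ 1 and C ≥ 1 satisfy M < C^{1−μ} and 2·log_t C ≤ δ. Let f, g be positive functions (t,M)-close to ψ and φ respectively, and let (z(i,j), w(i,j)) be the rational state system for (f, g) with initial data satisfying C^{−1}·t^{k_i} ≤ z_i ≤ C·t^{k_i} for some k ∈ S^ℕ and C^{−1}·t^{q^{(j mod (m+1))}} ≤ w^j ≤ C·t^{q^{(j mod (m+1))}} for all j. Then max(z(i,j)/z(i,j+p(m+1)l), z(i,j+p(m+1)l)/z(i,j)) ≤ C⁴ for all i, j, l ∈ ℕ. -/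

import Mathlib

/-- The internal state sequence of the automaton `(ψ, φ)` with initial state `q`
reading the input tape `k`: `q_0 = q`, `q_{i+1} = φ(q_i, k_i, …, k_{i+β})`. -/
def qSeq (β : ℕ) (φ : (Fin (β + 2) → ℝ) → ℝ) (q : ℝ) (k : ℕ → ℝ) : ℕ → ℝ
  | 0 => q
  | i + 1 => φ (Fin.cons (qSeq β φ q k i) (fun m : Fin (β + 1) => k (i + (m : ℕ))))

/-- The output sequence `A^{(ψ,φ)}_q(k)`: `k'_i = ψ(q_i, k_i, …, k_{i+α})`. -/
def outSeq (α β : ℕ) (ψ : (Fin (α + 2) → ℝ) → ℝ) (φ : (Fin (β + 2) → ℝ) → ℝ)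
    (q : ℝ) (k : ℕ → ℝ) : ℕ → ℝ :=
  fun i => ψ (Fin.cons (qSeq β φ q k i) (fun m : Fin (α + 1) => k (i + (m : ℕ))))

/-- The ideal evolution of the columns of the state system: column `j+1` is the output
of the automaton `A` with state `qv (j mod (m+1))` applied to column `j`. -/
def Kcol (α β m : ℕ) (ψ : (Fin (α + 2) → ℝ) → ℝ) (φ : (Fin (β + 2) → ℝ) → ℝ)
    (qv : Fin (m + 1) → ℝ) (k0 : ℕ → ℝ) : ℕ → ℕ → ℝ
  | 0 => k0
  | j + 1 => outSeq α β ψ φ (qv ⟨j % (m + 1), Nat.mod_lt j (Nat.succ_pos m)⟩)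
      (Kcol α β m ψ φ qv k0 j)

lemma aux_log_close {t C x q : ℝ} (ht : 1 < t) (hC : 1 ≤ C)
    (h1 : C⁻¹ * t ^ q ≤ x) (h2 : x ≤ C * t ^ q) :
    |Real.log x / Real.log t - q| ≤ Real.log C / Real.log t := by
  have ht0 : (0:ℝ) < t := lt_trans zero_lt_one ht
  have hlt : 0 < Real.log t := Real.log_pos ht
  have hC0 : (0:ℝ) < C := lt_of_lt_of_le zero_lt_one hC
  have htq : (0:ℝ) < t ^ q := Real.rpow_pos_of_pos ht0 q
  have hx0 : (0:ℝ) < x := lt_of_lt_of_le (by positivity) h1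
  have hu : Real.log x ≤ Real.log C + q * Real.log t := by
    have := (Real.log_le_log_iff hx0 (by positivity)).mpr h2
    rwa [Real.log_mul (ne_of_gt hC0) (ne_of_gt htq), Real.log_rpow ht0] at this
  have hl : -Real.log C + q * Real.log t ≤ Real.log x := by
    have := (Real.log_le_log_iff (by positivity) hx0).mpr h1
    rwa [Real.log_mul (ne_of_gt (inv_pos.mpr hC0)) (ne_of_gt htq), Real.log_inv,
      Real.log_rpow ht0] at this
  rw [abs_le]
  constructor
  · have h' : (-Real.log C + q * Real.log t) / Real.log t ≤ Real.log x / Real.log t := by gcongr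
    rw [add_div, mul_div_cancel_right₀ q (ne_of_gt hlt), neg_div] at h'
    linarith
  · have h' : Real.log x / Real.log t ≤ (Real.log C + q * Real.log t) / Real.log t := by gcongr
    rw [add_div, mul_div_cancel_right₀ q (ne_of_gt hlt)] at h'
    linarith

lemma aux_ratio {t C x y : ℝ} (ht : 1 < t) (hC : 1 ≤ C) (hx : 0 < x) (hy : 0 < y)
    (h : Real.log x / Real.log t - Real.log y / Real.log t ≤ 2 * (Real.log C / Real.log t)) :
    x / y ≤ C ^ 2 := by
  have hlt : 0 < Real.log t := Real.log_pos ht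
  have h1 : Real.log x - Real.log y ≤ 2 * Real.log C := by
    rw [div_sub_div_same, ← mul_div_assoc] at h
    have h'' := mul_le_mul_of_nonneg_right h (le_of_lt hlt)
    rwa [div_mul_cancel₀ _ (ne_of_gt hlt), div_mul_cancel₀ _ (ne_of_gt hlt)] at h''
  have h2 : Real.log (x / y) ≤ Real.log (C ^ 2) := by
    rw [Real.log_div (ne_of_gt hx) (ne_of_gt hy), Real.log_pow]
    push_cast
    linarith
  have hC0 : (0:ℝ) < C := lt_of_lt_of_le zero_lt_one hC
  exact (Real.log_le_log_iff (by positivity) (by positivity)).mp h2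

lemma aux_step {n : ℕ} {δ μ t M C : ℝ} (ht : 1 < t) (hμ0 : 0 ≤ μ) (hδ0 : 0 < δ)
    (hCδ : 2 * (Real.log C / Real.log t) ≤ δ)
    (heM : Real.log M / Real.log t + μ * (Real.log C / Real.log t) ≤ Real.log C / Real.log t)
    (F : (Fin (n + 2) → ℝ) → ℝ) (G : (Fin (n + 2) → ℝ) → ℝ)
    (q0 : ℝ) (s : Fin (n + 1) → ℝ)
    (hstab : ∀ v : Fin (n + 2) → ℝ, dist v (Fin.cons q0 s) < δ →
      |F v - F (Fin.cons q0 s)| ≤ μ * dist v (Fin.cons q0 s))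
    (v : Fin (n + 2) → ℝ)
    (hG : |Real.log (G v) / Real.log t - F (fun k => Real.log (v k) / Real.log t)|
      ≤ Real.log M / Real.log t)
    (hclose : ∀ k, |Real.log (v k) / Real.log t - (Fin.cons q0 s : Fin (n + 2) → ℝ) k|
      ≤ Real.log C / Real.log t) :
    |Real.log (G v) / Real.log t - F (Fin.cons q0 s)| ≤ Real.log C / Real.log t := by
  have he0 : 0 ≤ Real.log C / Real.log t := le_trans (abs_nonneg _) (hclose 0)
  have hdist : dist (fun k => Real.log (v k) / Real.log t) (Fin.cons q0 s)
      ≤ Real.log C / Real.log t :=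
    (dist_pi_le_iff he0).mpr (fun k => by rw [Real.dist_eq]; exact hclose k)
  have hdlt : dist (fun k => Real.log (v k) / Real.log t) (Fin.cons q0 s) < δ :=
    lt_of_le_of_lt hdist (by linarith)
  have h3 : |F (fun k => Real.log (v k) / Real.log t) - F (Fin.cons q0 s)|
      ≤ μ * (Real.log C / Real.log t) :=
    le_trans (hstab _ hdlt) (mul_le_mul_of_nonneg_left hdist hμ0)
  calc |Real.log (G v) / Real.log t - F (Fin.cons q0 s)|
      ≤ |Real.log (G v) / Real.log t - F (fun k => Real.log (v k) / Real.log t)|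
        + |F (fun k => Real.log (v k) / Real.log t) - F (Fin.cons q0 s)| := abs_sub_le _ _ _
    _ ≤ Real.log M / Real.log t + μ * (Real.log C / Real.log t) := add_le_add hG h3
    _ ≤ Real.log C / Real.log t := heM

/-- if the composition `A_{q^m} ∘ ⋯ ∘ A_{q^0}` has a `p`-fold iterate equal
to the identity on `S^ℕ`, then the rational state system of a `(t,M)`-close pair with
exponentially comparable, periodically chosen initial data is quasi-periodic:
`(z(i,j)/z(i,j+p(m+1)l))^{±1} ≤ C⁴`. -/
theorem statement17 (α β : ℕ) (Q S : Finset ℝ) (δ μ : ℝ)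
    (hδ0 : 0 < δ) (hδ1 : δ < 1) (hμ0 : 0 ≤ μ) (hμ1 : μ < 1)
    (ψ : (Fin (α + 2) → ℝ) → ℝ) (φ : (Fin (β + 2) → ℝ) → ℝ)
    (hext1 : ∀ (q : ℝ) (s : Fin (α + 1) → ℝ), q ∈ Q → (∀ k, s k ∈ S) →
      ψ (Fin.cons q s) ∈ S)
    (hext2 : ∀ (q : ℝ) (s : Fin (β + 1) → ℝ), q ∈ Q → (∀ k, s k ∈ S) →
      φ (Fin.cons q s) ∈ Q)
    (hstab1 : ∀ (q : ℝ) (s : Fin (α + 1) → ℝ), q ∈ Q → (∀ k, s k ∈ S) →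
      ∀ v : Fin (α + 2) → ℝ, dist v (Fin.cons q s) < δ →
        |ψ v - ψ (Fin.cons q s)| ≤ μ * dist v (Fin.cons q s))
    (hstab2 : ∀ (q : ℝ) (s : Fin (β + 1) → ℝ), q ∈ Q → (∀ k, s k ∈ S) →
      ∀ v : Fin (β + 2) → ℝ, dist v (Fin.cons q s) < δ →
        |φ v - φ (Fin.cons q s)| ≤ μ * dist v (Fin.cons q s))
    (m : ℕ) (qv : Fin (m + 1) → ℝ) (hqv : ∀ j, qv j ∈ Q)
    (p : ℕ) (hp : 1 ≤ p)
    (hper : ∀ k : ℕ → ℝ, (∀ i, k i ∈ S) →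
      (fun kk : ℕ → ℝ =>
        (List.ofFn qv).foldl (fun kk' qq => outSeq α β ψ φ qq kk') kk)^[p] k = k)
    (t M C : ℝ) (ht : 1 < t) (hM : 1 ≤ M) (hC : 1 ≤ C)
    (hMC : M < C ^ (1 - μ)) (hCδ : 2 * (Real.log C / Real.log t) ≤ δ)
    (f : (Fin (α + 2) → ℝ) → ℝ) (g : (Fin (β + 2) → ℝ) → ℝ)
    (hfpos : ∀ v : Fin (α + 2) → ℝ, (∀ k, 0 < v k) → 0 < f v)
    (hgpos : ∀ v : Fin (β + 2) → ℝ, (∀ k, 0 < v k) → 0 < g v)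
    (hf : ∀ v : Fin (α + 2) → ℝ, (∀ k, 0 < v k) →
      |Real.log (f v) / Real.log t - ψ (fun k => Real.log (v k) / Real.log t)|
        ≤ Real.log M / Real.log t)
    (hg : ∀ v : Fin (β + 2) → ℝ, (∀ k, 0 < v k) →
      |Real.log (g v) / Real.log t - φ (fun k => Real.log (v k) / Real.log t)|
        ≤ Real.log M / Real.log t)
    (k0 : ℕ → ℝ) (hk0 : ∀ i, k0 i ∈ S)
    (z w : ℕ → ℕ → ℝ)
    (hz0 : ∀ i, C⁻¹ * t ^ k0 i ≤ z i 0 ∧ z i 0 ≤ C * t ^ k0 i)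
    (hw0 : ∀ j : ℕ, C⁻¹ * t ^ qv ⟨j % (m + 1), Nat.mod_lt j (Nat.succ_pos m)⟩ ≤ w 0 j ∧
      w 0 j ≤ C * t ^ qv ⟨j % (m + 1), Nat.mod_lt j (Nat.succ_pos m)⟩)
    (hz : ∀ i j, z i (j + 1) = f (Fin.cons (w i j) (fun k : Fin (α + 1) => z (i + (k : ℕ)) j)))
    (hw : ∀ i j, w (i + 1) j = g (Fin.cons (w i j) (fun k : Fin (β + 1) => z (i + (k : ℕ)) j))) :
    ∀ i j l : ℕ,
      max (z i j / z i (j + p * (m + 1) * l)) (z i (j + p * (m + 1) * l) / z i j) ≤ C ^ 4 := by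
  have ht0 : (0:ℝ) < t := lt_trans zero_lt_one ht
  have hlt : 0 < Real.log t := Real.log_pos ht
  have hC0 : (0:ℝ) < C := lt_of_lt_of_le zero_lt_one hC
  have he0 : 0 ≤ Real.log C / Real.log t := div_nonneg (Real.log_nonneg hC) hlt.le
  have heM : Real.log M / Real.log t + μ * (Real.log C / Real.log t)
      ≤ Real.log C / Real.log t := by
    have h1 : Real.log M < (1 - μ) * Real.log C := by
      have h := Real.log_lt_log (lt_of_lt_of_le zero_lt_one hM) hMC
      rwa [Real.log_rpow hC0] at h
    have h2 : Real.log M / Real.log t < ((1 - μ) * Real.log C) / Real.log t := by gcongr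
    rw [mul_div_assoc] at h2
    nlinarith [he0]
  set K := Kcol α β m ψ φ qv k0 with hK
  have hK0 : K 0 = k0 := rfl
  have hKsucc : ∀ j : ℕ, K (j + 1)
      = outSeq α β ψ φ (qv ⟨j % (m + 1), Nat.mod_lt j (Nat.succ_pos m)⟩) (K j) :=
    fun j => rfl
  -- periodicity of the ideal evolution
  have hA : ∀ j0 : ℕ, j0 % (m + 1) = 0 → ∀ s : ℕ, s ≤ m + 1 →
      K (j0 + s) = ((List.ofFn qv).take s).foldl
        (fun kk' qq => outSeq α β ψ φ qq kk') (K j0) := by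
    intro j0 hj0 s
    induction s with
    | zero => intro _; simp
    | succ s ih =>
      intro hs
      have hsm : s < m + 1 := Nat.lt_of_succ_le hs
      have hmod : (j0 + s) % (m + 1) = s := by
        rw [Nat.add_mod, hj0]
        simp [Nat.mod_eq_of_lt hsm]
      have hlen : s < (List.ofFn qv).length := by rw [List.length_ofFn]; exact hsm
      have htake : (List.ofFn qv).take (s + 1) = (List.ofFn qv).take s ++ [qv ⟨s, hsm⟩] := by
        rw [List.take_succ, List.getElem?_eq_getElem hlen, List.getElem_ofFn]
        rfl
      have hstep : j0 + (s + 1) = (j0 + s) + 1 := rfl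
      rw [hstep, hKsucc, htake, List.foldl_append, ← ih (Nat.le_of_succ_le hs)]
      simp only [List.foldl_cons, List.foldl_nil]
      have hfin : (⟨(j0 + s) % (m + 1), Nat.mod_lt (j0 + s) (Nat.succ_pos m)⟩ : Fin (m + 1))
          = ⟨s, hsm⟩ := Fin.ext hmod
      rw [hfin]
  have hB : ∀ s : ℕ, K (s * (m + 1)) =
      (fun kk : ℕ → ℝ =>
        (List.ofFn qv).foldl (fun kk' qq => outSeq α β ψ φ qq kk') kk)^[s] k0 := by
    intro s
    induction s with
    | zero => rw [Nat.zero_mul, Function.iterate_zero_apply]; exact hK0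
    | succ s ih =>
      have hmul : (s + 1) * (m + 1) = s * (m + 1) + (m + 1) := by ring
      rw [hmul, hA (s * (m + 1)) (Nat.mul_mod_left s (m + 1)) (m + 1) le_rfl, ih,
        Function.iterate_succ_apply',
        List.take_of_length_le (le_of_eq (List.length_ofFn (f := qv)))]
  have hKp : K (p * (m + 1)) = k0 := by
    rw [hB p]; exact hper k0 hk0
  have hshift : ∀ j : ℕ, K (p * (m + 1) + j) = K j := by
    intro j
    induction j with
    | zero => rw [Nat.add_zero, hKp, hK0]
    | succ j ih =>
      have h1 : p * (m + 1) + (j + 1) = (p * (m + 1) + j) + 1 := rfl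
      rw [h1, hKsucc, hKsucc, ih]
      have hmod : (p * (m + 1) + j) % (m + 1) = j % (m + 1) := by
        rw [Nat.add_comm]; exact Nat.add_mul_mod_self_right j p (m + 1)
      have hfin : (⟨(p * (m + 1) + j) % (m + 1),
            Nat.mod_lt (p * (m + 1) + j) (Nat.succ_pos m)⟩ : Fin (m + 1))
          = ⟨j % (m + 1), Nat.mod_lt j (Nat.succ_pos m)⟩ := Fin.ext hmod
      rw [hfin]
  have hKper : ∀ l j : ℕ, K (j + p * (m + 1) * l) = K j := by
    intro l
    induction l with
    | zero => intro j; simp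
    | succ l ih =>
      intro j
      have h1 : j + p * (m + 1) * (l + 1) = p * (m + 1) + (j + p * (m + 1) * l) := by ring
      rw [h1, hshift, ih]
  -- main inductive estimate
  have main : ∀ j i : ℕ, K j i ∈ S ∧ 0 < z i j ∧
      |Real.log (z i j) / Real.log t - K j i| ≤ Real.log C / Real.log t := by
    intro j
    induction j with
    | zero =>
      intro i
      have htk : (0:ℝ) < t ^ k0 i := Real.rpow_pos_of_pos ht0 _
      refine ⟨hk0 i, lt_of_lt_of_le (by positivity) (hz0 i).1, ?_⟩
      rw [hK0]
      exact aux_log_close ht hC (hz0 i).1 (hz0 i).2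
    | succ j ih =>
      have hw_col : ∀ i : ℕ,
          qSeq β φ (qv ⟨j % (m + 1), Nat.mod_lt j (Nat.succ_pos m)⟩) (K j) i ∈ Q ∧
          0 < w i j ∧
          |Real.log (w i j) / Real.log t
            - qSeq β φ (qv ⟨j % (m + 1), Nat.mod_lt j (Nat.succ_pos m)⟩) (K j) i|
            ≤ Real.log C / Real.log t := by
        intro i
        induction i with
        | zero =>
          have htq : (0:ℝ) < t ^ qv ⟨j % (m + 1), Nat.mod_lt j (Nat.succ_pos m)⟩ :=
            Real.rpow_pos_of_pos ht0 _
          refine ⟨?_, lt_of_lt_of_le (by positivity) (hw0 j).1, ?_⟩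
          · simp only [qSeq]; exact hqv _
          · simp only [qSeq]
            exact aux_log_close ht hC (hw0 j).1 (hw0 j).2
        | succ i ihw =>
          have hv : ∀ k : Fin (β + 2),
              0 < (Fin.cons (w i j) (fun k : Fin (β + 1) => z (i + (k : ℕ)) j)
                : Fin (β + 2) → ℝ) k := by
            intro k
            refine Fin.cases ?_ ?_ k
            · simpa using ihw.2.1
            · intro k'; simpa using (ih (i + (k' : ℕ))).2.1
          have hclose : ∀ k : Fin (β + 2),
              |Real.log ((Fin.cons (w i j) (fun k : Fin (β + 1) => z (i + (k : ℕ)) j)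
                  : Fin (β + 2) → ℝ) k) / Real.log t
                - (Fin.cons (qSeq β φ (qv ⟨j % (m + 1), Nat.mod_lt j (Nat.succ_pos m)⟩) (K j) i)
                    (fun mm : Fin (β + 1) => K j (i + (mm : ℕ))) : Fin (β + 2) → ℝ) k|
                ≤ Real.log C / Real.log t := by
            intro k
            refine Fin.cases ?_ ?_ k
            · simpa using ihw.2.2
            · intro k'; simpa using (ih (i + (k' : ℕ))).2.2
          refine ⟨?_, ?_, ?_⟩
          · simp only [qSeq]
            exact hext2 _ _ ihw.1 (fun k => (ih (i + (k : ℕ))).1)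
          · rw [hw i j]; exact hgpos _ hv
          · rw [hw i j]
            simp only [qSeq]
            exact aux_step ht hμ0 hδ0 hCδ heM φ g _ _
              (hstab2 _ _ ihw.1 (fun k => (ih (i + (k : ℕ))).1)) _ (hg _ hv) hclose
      intro i
      have hv : ∀ k : Fin (α + 2),
          0 < (Fin.cons (w i j) (fun k : Fin (α + 1) => z (i + (k : ℕ)) j)
            : Fin (α + 2) → ℝ) k := by
        intro k
        refine Fin.cases ?_ ?_ k
        · simpa using (hw_col i).2.1
        · intro k'; simpa using (ih (i + (k' : ℕ))).2.1
      have hclose : ∀ k : Fin (α + 2),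
          |Real.log ((Fin.cons (w i j) (fun k : Fin (α + 1) => z (i + (k : ℕ)) j)
              : Fin (α + 2) → ℝ) k) / Real.log t
            - (Fin.cons (qSeq β φ (qv ⟨j % (m + 1), Nat.mod_lt j (Nat.succ_pos m)⟩) (K j) i)
                (fun mm : Fin (α + 1) => K j (i + (mm : ℕ))) : Fin (α + 2) → ℝ) k|
            ≤ Real.log C / Real.log t := by
        intro k
        refine Fin.cases ?_ ?_ k
        · simpa using (hw_col i).2.2
        · intro k'; simpa using (ih (i + (k' : ℕ))).2.2
      refine ⟨?_, ?_, ?_⟩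
      · rw [hKsucc j]
        simp only [outSeq]
        exact hext1 _ _ (hw_col i).1 (fun k => (ih (i + (k : ℕ))).1)
      · rw [hz i j]; exact hfpos _ hv
      · rw [hz i j, hKsucc j]
        simp only [outSeq]
        exact aux_step ht hμ0 hδ0 hCδ heM ψ f _ _
          (hstab1 _ _ (hw_col i).1 (fun k => (ih (i + (k : ℕ))).1)) _ (hf _ hv) hclose
  -- conclusion
  intro i j l
  obtain ⟨-, hz1, hb1⟩ := main j i
  obtain ⟨-, hz2, hb2⟩ := main (j + p * (m + 1) * l) i
  rw [congrFun (hKper l j) i] at hb2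
  have hd : |Real.log (z i j) / Real.log t
      - Real.log (z i (j + p * (m + 1) * l)) / Real.log t|
      ≤ 2 * (Real.log C / Real.log t) := by
    have h4 : |K j i - Real.log (z i (j + p * (m + 1) * l)) / Real.log t|
        ≤ Real.log C / Real.log t := by rw [abs_sub_comm]; exact hb2
    have h5 := abs_sub_le (Real.log (z i j) / Real.log t) (K j i)
      (Real.log (z i (j + p * (m + 1) * l)) / Real.log t)
    linarith
  have hC24 : C ^ 2 ≤ C ^ 4 := pow_le_pow_right₀ hC (by norm_num)
  apply max_le
  · refine le_trans (aux_ratio ht hC hz1 hz2 ?_) hC24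
    exact le_trans (le_abs_self _) hd
  · refine le_trans (aux_ratio ht hC hz2 hz1 ?_) hC24
    rw [abs_sub_comm] at hd
    exact le_trans (le_abs_self _) hd
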